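/- Let d: [t_j, t_{j+1}) → ℝ be C¹ with d(t_j) = 0, and suppose (d²)'(t) ≤ ρ₁ d²(t) + α₁ a(t) + α₂ b(t) where a(t) = ‖u(·,t)‖², b(t) = u(1,t)², and ρ₁, α₁, α₂ > 0. Let m satisfy m' = −ηm − ρd² + β₁a + β₂b with m(t_j) > 0, β₁ = α₁/(γ(1−σ)), β₂ = α₂/(γ(1−σ)), σ ∈ (0,1). If the next event time is t_{j+1} = inf{t > t_j : d²(t) > γ m(t)}, then t_{j+1} − t_j ≥ τ for a constant τ > 0 depending only on (ρ₁, γ, η, ρ, σ) and not on the initial data. -/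

import Mathlib

set_option maxHeartbeats 1000000


/-- Uniform minimal dwell-time for the dynamic event trigger: there is `τ > 0`,
depending only on the parameters, such that every inter-event interval has
length at least `τ`. -/
theorem minimal_dwell_time (ρ₁ α₁ α₂ γ η ρ σ : ℝ)
    (hρ₁ : 0 < ρ₁) (hα₁ : 0 < α₁) (hα₂ : 0 < α₂)
    (hγ : 0 < γ) (hη : 0 < η) (hρ : 0 < ρ) (hσ : 0 < σ) (hσ1 : σ < 1) :
    ∃ τ : ℝ, 0 < τ ∧
      ∀ (tj tnext : ℝ) (d m a b : ℝ → ℝ),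
        tj < tnext →
        ContinuousOn d (Set.Icc tj tnext) → d tj = 0 →
        ContinuousOn m (Set.Icc tj tnext) → 0 < m tj →
        (∀ t ∈ Set.Ioo tj tnext, 0 ≤ a t) →
        (∀ t ∈ Set.Ioo tj tnext, 0 ≤ b t) →
        (∀ t ∈ Set.Ioo tj tnext,
          HasDerivAt (fun s => d s ^ 2) (deriv (fun s => d s ^ 2) t) t ∧
          deriv (fun s => d s ^ 2) t ≤ ρ₁ * d t ^ 2 + α₁ * a t + α₂ * b t) →
        (∀ t ∈ Set.Ioo tj tnext,
          HasDerivAt m (-η * m t - ρ * d t ^ 2 +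
            (α₁ / (γ * (1 - σ))) * a t + (α₂ / (γ * (1 - σ))) * b t) t) →
        -- `tnext` is the first time the trigger fires:
        (∀ t : ℝ, tj ≤ t → t < tnext → d t ^ 2 ≤ γ * m t) →
        γ * m tnext ≤ d tnext ^ 2 →
        τ ≤ tnext - tj := by
  have hσ1' : 0 < 1 - σ := by linarith
  set L : ℝ := ρ₁ + η + ρ * γ with hLdef
  have hLpos : 0 < L := by positivity
  refine ⟨σ / L, by positivity, ?_⟩
  intro tj tnext d m a b hlt hdc hd0 hmc hm0 ha hb hd' hm' htrig hfire
  set K : ℝ := η + ρ * γ with hKdef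
  set β₁ : ℝ := α₁ / (γ * (1 - σ)) with hβ₁def
  set β₂ : ℝ := α₂ / (γ * (1 - σ)) with hβ₂def
  have hβ₁pos : 0 < β₁ := by positivity
  have hβ₂pos : 0 < β₂ := by positivity
  have hβ₁eq : β₁ * (γ * (1 - σ)) = α₁ := div_mul_cancel₀ _ (by positivity)
  have hβ₂eq : β₂ * (γ * (1 - σ)) = α₂ := div_mul_cancel₀ _ (by positivity)
  -- Step 1 : m is positive on [tj, tnext]
  have hmpos : ∀ t ∈ Set.Icc tj tnext, 0 < m t := by
    have hmono : MonotoneOn (fun t => m t * Real.exp (K * t)) (Set.Icc tj tnext) := by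
      apply monotoneOn_of_deriv_nonneg (convex_Icc _ _)
      · exact hmc.mul ((Real.continuous_exp.comp (continuous_const.mul continuous_id)).continuousOn)
      · rw [interior_Icc]
        intro t ht
        have hK' : HasDerivAt (fun s => Real.exp (K * s)) (Real.exp (K * t) * K) t := by
          simpa using ((hasDerivAt_id t).const_mul K).exp
        exact ((hm' t ht).mul hK').differentiableAt.differentiableWithinAt
      · rw [interior_Icc]
        intro t ht
        have hK' : HasDerivAt (fun s => Real.exp (K * s)) (Real.exp (K * t) * K) t := by
          simpa using ((hasDerivAt_id t).const_mul K).exp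
        have hprod : HasDerivAt (fun s => m s * Real.exp (K * s)) _ t := (hm' t ht).mul hK'
        rw [hprod.deriv]
        have htr := htrig t (le_of_lt ht.1) ht.2
        have ha' := ha t ht
        have hb' := hb t ht
        have he : (0:ℝ) < Real.exp (K * t) := Real.exp_pos _
        have h1 : 0 ≤ -η * m t - ρ * d t ^ 2 + β₁ * a t + β₂ * b t + K * m t := by
          have h2 : ρ * d t ^ 2 ≤ ρ * (γ * m t) := by
            exact mul_le_mul_of_nonneg_left htr hρ.le
          have h3 : 0 ≤ β₁ * a t := mul_nonneg hβ₁pos.le ha'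
          have h4 : 0 ≤ β₂ * b t := mul_nonneg hβ₂pos.le hb'
          rw [hKdef]; linarith [h2, h3, h4]
        nlinarith [mul_nonneg h1 he.le]
    intro t ht
    have hle := hmono (Set.left_mem_Icc.mpr hlt.le) ht ht.1
    have hpos0 : 0 < m tj * Real.exp (K * tj) := mul_pos hm0 (Real.exp_pos _)
    by_contra hcon
    push_neg at hcon
    have : m t * Real.exp (K * t) ≤ 0 :=
      mul_nonpos_of_nonpos_of_nonneg hcon (Real.exp_pos _).le
    simp only at hle
    linarith
  -- The "gap" function H
  set H : ℝ → ℝ := fun t => d t ^ 2 - ((1 - σ) * γ) * m t with hHdef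
  have hHc : ContinuousOn H (Set.Icc tj tnext) :=
    (hdc.pow 2).sub (continuousOn_const.mul hmc)
  set S : Set ℝ := Set.Icc tj tnext ∩ H ⁻¹' Set.Iic 0 with hSdef
  have htjS : tj ∈ S := by
    constructor
    · exact Set.left_mem_Icc.mpr hlt.le
    · have : H tj = -(((1 - σ) * γ) * m tj) := by simp [hHdef, hd0]
      have hpos : 0 < ((1 - σ) * γ) * m tj := by positivity
      simp only [Set.mem_preimage, Set.mem_Iic]
      linarith [this]
  have hSclosed : IsClosed S := by
    rw [hSdef]
    exact ContinuousOn.preimage_isClosed_of_isClosed hHc isClosed_Icc isClosed_Iic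
  have hScompact : IsCompact S :=
    isCompact_Icc.of_isClosed_subset hSclosed Set.inter_subset_left
  set t₀ : ℝ := sSup S with ht₀def
  have ht₀S : t₀ ∈ S := hScompact.sSup_mem ⟨tj, htjS⟩
  have ht₀Icc : t₀ ∈ Set.Icc tj tnext := ht₀S.1
  have hmne : 0 < m tnext := hmpos tnext ⟨hlt.le, le_rfl⟩
  have hHnext : 0 < H tnext := by
    have : σ * (γ * m tnext) ≤ H tnext := by
      simp only [hHdef]; nlinarith [hfire]
    nlinarith [mul_pos hγ hmne, mul_pos hσ (mul_pos hγ hmne)]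
  have ht₀lt : t₀ < tnext := by
    rcases lt_or_eq_of_le ht₀Icc.2 with h | h
    · exact h
    · exfalso
      have : H t₀ ≤ 0 := ht₀S.2
      rw [h] at this
      linarith
  have hgt : ∀ t, t₀ < t → t ≤ tnext → 0 < H t := by
    intro t h1 h2
    by_contra hcon
    push_neg at hcon
    have htS : t ∈ S := ⟨⟨le_trans ht₀Icc.1 h1.le, h2⟩, hcon⟩
    have : t ≤ t₀ := le_csSup (hScompact.bddAbove) htS
    linarith
  -- The ratio ψ = d²/(γ m)
  set ψ : ℝ → ℝ := fun t => d t ^ 2 / (γ * m t) with hψdef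
  -- derivative bound on (t₀, tnext)
  have key : ∀ t ∈ Set.Ioo t₀ tnext, ∃ ψ', HasDerivAt ψ ψ' t ∧ ψ' ≤ L := by
    intro t ht
    have htIoo : t ∈ Set.Ioo tj tnext := ⟨lt_of_le_of_lt ht₀Icc.1 ht.1, ht.2⟩
    obtain ⟨hD, hDle⟩ := hd' t htIoo
    have hM := hm' t htIoo
    have hmt : 0 < m t := hmpos t ⟨htIoo.1.le, htIoo.2.le⟩
    have hden : γ * m t ≠ 0 := by positivity
    set D : ℝ := deriv (fun s => d s ^ 2) t with hDdef
    set M : ℝ := -η * m t - ρ * d t ^ 2 + β₁ * a t + β₂ * b t with hMdef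
    have hψ : HasDerivAt ψ ((D * (γ * m t) - d t ^ 2 * (γ * M)) / (γ * m t) ^ 2) t :=
      hD.div (hM.const_mul γ) hden
    refine ⟨_, hψ, ?_⟩
    rw [div_le_iff₀ (by positivity)]
    have htr : d t ^ 2 ≤ γ * m t := htrig t htIoo.1.le htIoo.2
    have ha' := ha t htIoo
    have hb' := hb t htIoo
    have hHt : 0 < H t := hgt t ht.1 ht.2.le
    have hHge : (1 - σ) * γ * m t ≤ d t ^ 2 := by
      simp only [hHdef] at hHt; linarith
    -- a / b terms are absorbed
    have hterm1 : α₁ * m t ≤ β₁ * d t ^ 2 := by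
      have := mul_le_mul_of_nonneg_left hHge hβ₁pos.le
      calc α₁ * m t = β₁ * (γ * (1 - σ)) * m t := by rw [hβ₁eq]
        _ = β₁ * ((1 - σ) * γ * m t) := by ring
        _ ≤ β₁ * d t ^ 2 := this
    have hterm2 : α₂ * m t ≤ β₂ * d t ^ 2 := by
      have := mul_le_mul_of_nonneg_left hHge hβ₂pos.le
      calc α₂ * m t = β₂ * (γ * (1 - σ)) * m t := by rw [hβ₂eq]
        _ = β₂ * ((1 - σ) * γ * m t) := by ring
        _ ≤ β₂ * d t ^ 2 := this
    have ha2 : a t * (α₁ * m t) ≤ a t * (β₁ * d t ^ 2) :=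
      mul_le_mul_of_nonneg_left hterm1 ha'
    have hb2 : b t * (α₂ * m t) ≤ b t * (β₂ * d t ^ 2) :=
      mul_le_mul_of_nonneg_left hterm2 hb'
    have hDm : D * m t ≤ (ρ₁ * d t ^ 2 + α₁ * a t + α₂ * b t) * m t :=
      mul_le_mul_of_nonneg_right hDle hmt.le
    have hd4 : d t ^ 2 * d t ^ 2 ≤ (γ * m t) * (γ * m t) :=
      mul_le_mul htr htr (sq_nonneg _) (by positivity)
    have hdm : d t ^ 2 * m t ≤ (γ * m t) * m t :=
      mul_le_mul_of_nonneg_right htr hmt.le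
    rw [hMdef, hLdef]
    linarith [mul_le_mul_of_nonneg_left hDm hγ.le,
      mul_le_mul_of_nonneg_left ha2 hγ.le,
      mul_le_mul_of_nonneg_left hb2 hγ.le,
      mul_le_mul_of_nonneg_left hd4 (mul_pos hρ hγ).le,
      mul_le_mul_of_nonneg_left hdm (mul_pos (by linarith : (0:ℝ) < ρ₁ + η) hγ).le]
  -- Monotonicity of L t - ψ t on [t₀, tnext]
  have hsub : Set.Icc t₀ tnext ⊆ Set.Icc tj tnext := Set.Icc_subset_Icc ht₀Icc.1 le_rfl
  have hψc : ContinuousOn ψ (Set.Icc t₀ tnext) := by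
    apply ContinuousOn.div ((hdc.mono hsub).pow 2) (continuousOn_const.mul (hmc.mono hsub))
    intro t ht
    have := hmpos t (hsub ht)
    exact mul_ne_zero hγ.ne' this.ne'
  have hmono : MonotoneOn (fun t => L * t - ψ t) (Set.Icc t₀ tnext) := by
    apply monotoneOn_of_deriv_nonneg (convex_Icc _ _)
    · exact ((continuous_const.mul continuous_id).continuousOn).sub hψc
    · rw [interior_Icc]
      intro t ht
      obtain ⟨ψ', hψ', _⟩ := key t ht
      have : HasDerivAt (fun s => L * s - ψ s) (L - ψ') t := by
        exact (((hasDerivAt_id t).const_mul L).sub hψ').congr_deriv (by ring)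
      exact this.differentiableAt.differentiableWithinAt
    · rw [interior_Icc]
      intro t ht
      obtain ⟨ψ', hψ', hle⟩ := key t ht
      have hg : HasDerivAt (fun s => L * s - ψ s) (L - ψ') t := by
        exact (((hasDerivAt_id t).const_mul L).sub hψ').congr_deriv (by ring)
      rw [hg.deriv]
      linarith
  have hchain := hmono (Set.left_mem_Icc.mpr ht₀lt.le)
      (Set.right_mem_Icc.mpr ht₀lt.le) ht₀lt.le
  simp only at hchain
  -- endpoint values of ψ
  have hm₀ : 0 < m t₀ := hmpos t₀ ht₀Icc
  have hψt₀ : ψ t₀ ≤ 1 - σ := by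
    have hH₀ : H t₀ ≤ 0 := ht₀S.2
    simp only [hHdef] at hH₀
    rw [hψdef]
    rw [div_le_iff₀ (by positivity)]
    nlinarith
  have hψnext : 1 ≤ ψ tnext := by
    rw [hψdef]
    rw [le_div_iff₀ (by positivity)]
    nlinarith [hfire]
  -- conclude
  rw [div_le_iff₀ hLpos]
  have h1 : L * t₀ - ψ t₀ ≤ L * tnext - ψ tnext := hchain
  have h2 : L * tj ≤ L * t₀ := mul_le_mul_of_nonneg_left ht₀Icc.1 hLpos.le
  nlinarith
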